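/- Let (H, ψ, {M_xa}, {N_yb}) be a commuting operator strategy: H a Hilbert space, ψ ∈ H a unit vector, {M_xa}_{a∈O_A} a POVM on H for each x ∈ I_A and {N_yb}_{b∈O_B} a POVM on H for each y ∈ I_B, with [M_xa, N_yb] = 0 for all indices. Define σ_xa := √(M_xa) |ψ⟩⟨ψ| √(M_xa), and let 𝔅 be the C*-subalgebra of B(H) generated by {N_yb}_{y∈I_B, b∈O_B} and the identity. Then (H, {σ_xa}, {N_yb}) is a quantum sequential strategy that is strongly non-signaling with respect to 𝔅, and it produces the same correlation: tr(σ_xa N_yb) = ⟨ψ, M_xa N_yb ψ⟩ for all a, b, x, y. -/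

import Mathlib

open scoped ComplexInnerProductSpace ComplexOrder

universe u

/-- The trace of an operator computed along a Hilbert basis. -/
noncomputable def traceAlong {H : Type*} [NormedAddCommGroup H] [InnerProductSpace ℂ H]
    {ι : Type*} (b : HilbertBasis ι ℂ H) (T : H →L[ℂ] H) : ℂ :=
  ∑' i, ⟪(b i : H), T (b i)⟫

/-- A POVM with outcomes in a finite type `O`: a family of positive operators summing to `1`. -/
def IsPOVM {H : Type*} [NormedAddCommGroup H] [InnerProductSpace ℂ H] [CompleteSpace H]
    {O : Type*} [Fintype O] (E : O → H →L[ℂ] H) : Prop :=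
  (∀ o, (E o).IsPositive) ∧ ∑ o, E o = 1

section aux
variable {H : Type*} [NormedAddCommGroup H] [InnerProductSpace ℂ H] [CompleteSpace H]
  {ι : Type*}

lemma aux_term (e : HilbertBasis ι ℂ H) (ψ : H) (A B : H →L[ℂ] H) (i : ι) :
    ⟪(e i : H), (A ∘L ((innerSL ℂ ψ).smulRight ψ) ∘L B) (e i)⟫
      = ⟪(ContinuousLinearMap.adjoint B) ψ, (e i : H)⟫ * ⟪(e i : H), A ψ⟫ := by
  simp [ContinuousLinearMap.comp_apply, ContinuousLinearMap.smulRight_apply, innerSL_apply_apply,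
    map_smul, inner_smul_right, ContinuousLinearMap.adjoint_inner_left, mul_comm]

lemma aux_summable (e : HilbertBasis ι ℂ H) (ψ : H) (A B : H →L[ℂ] H) :
    Summable fun i => ⟪(e i : H), (A ∘L ((innerSL ℂ ψ).smulRight ψ) ∘L B) (e i)⟫ := by
  simp only [aux_term]
  exact e.summable_inner_mul_inner _ _

lemma aux_trace (e : HilbertBasis ι ℂ H) (ψ : H) (A B : H →L[ℂ] H) :
    traceAlong e (A ∘L ((innerSL ℂ ψ).smulRight ψ) ∘L B) = ⟪ψ, B (A ψ)⟫ := by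
  unfold traceAlong
  simp only [aux_term]
  rw [e.tsum_inner_mul_inner, ContinuousLinearMap.adjoint_inner_left]

lemma aux_isClosed_centralizer (s : Set (H →L[ℂ] H)) :
    IsClosed ((StarSubalgebra.centralizer ℂ s : StarSubalgebra ℂ (H →L[ℂ] H)) :
      Set (H →L[ℂ] H)) := by
  rw [StarSubalgebra.coe_centralizer]
  have h : (s ∪ star s).centralizer
      = ⋂ m ∈ (s ∪ star s), {x : H →L[ℂ] H | m * x = x * m} := by
    ext x; simp [Set.mem_centralizer_iff]
  rw [h]
  exact isClosed_biInter fun m _ =>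
    isClosed_eq (continuous_const.mul continuous_id) (continuous_id.mul continuous_const)

lemma aux_cfc_mem_elemental {A : Type*} [CStarAlgebra A] (g : ℂ → ℂ) (a : A) :
    cfc g a ∈ StarAlgebra.elemental ℂ a := by
  refine cfc_cases (fun x => x ∈ StarAlgebra.elemental ℂ a) a g (zero_mem _) fun hg ha => ?_
  rw [cfcHom_eq_of_isStarNormal]
  exact SetLike.coe_mem _

set_option maxHeartbeats 1000000 in
set_option synthInstance.maxHeartbeats 400000 in
lemma aux_commute_sqrt {a b c : H →L[ℂ] H} (ha : 0 ≤ a) (hb : 0 ≤ b) (hsq : b * b = a)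
    (hc : IsSelfAdjoint c) (h : Commute a c) : Commute b c := by
  have hba : b = CFC.sqrt a := (CFC.sqrt_unique hsq hb).symm
  have hmem : b ∈ StarAlgebra.elemental ℂ a := by
    have e1 : cfcₙ NNReal.sqrt a = cfc NNReal.sqrt a := cfcₙ_eq_cfc (by fun_prop) (by simp)
    have e2 : cfc NNReal.sqrt a = cfc (fun x : ℝ => (NNReal.sqrt x.toNNReal : ℝ)) a :=
      cfc_nnreal_eq_real _ a ha
    have e3 : cfc (fun x : ℝ => (NNReal.sqrt x.toNNReal : ℝ)) a
        = cfc (fun x : ℂ => ((NNReal.sqrt x.re.toNNReal : ℝ) : ℂ)) a :=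
      cfc_real_eq_complex _ (IsSelfAdjoint.of_nonneg ha)
    rw [hba, show CFC.sqrt a = cfcₙ NNReal.sqrt a from rfl, e1, e2, e3]
    exact aux_cfc_mem_elemental _ a
  have hle : StarAlgebra.elemental ℂ a ≤ StarSubalgebra.centralizer ℂ {c} := by
    refine StarAlgebra.elemental.le_of_mem (aux_isClosed_centralizer _) ?_
    rw [StarSubalgebra.mem_centralizer_iff ℂ]
    rintro g rfl
    exact ⟨h.symm.eq, by rw [hc.star_eq]; exact h.symm.eq⟩
  have := ((StarSubalgebra.mem_centralizer_iff ℂ).mp (hle hmem)) c rfl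
  exact Commute.symm this.1
end aux

section main
variable {H : Type*} [NormedAddCommGroup H] [InnerProductSpace ℂ H] [CompleteSpace H]
  {ι : Type*}

lemma aux_traceAlong_sum (e : HilbertBasis ι ℂ H) {O : Type*} [Fintype O]
    (T : O → H →L[ℂ] H) (h : ∀ o, Summable fun i => ⟪(e i : H), T o (e i)⟫) :
    traceAlong e (∑ o, T o) = ∑ o, traceAlong e (T o) := by
  unfold traceAlong
  rw [← Summable.tsum_finsetSum (fun o _ => h o)]
  congr 1
  ext i
  simp [ContinuousLinearMap.sum_apply, inner_sum]

lemma aux_proj_pos (ψ : H) : ((innerSL ℂ ψ).smulRight ψ).IsPositive := by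
  constructor
  · rw [← ContinuousLinearMap.isSelfAdjoint_iff_isSymmetric, ContinuousLinearMap.isSelfAdjoint_iff']
    symm
    rw [ContinuousLinearMap.eq_adjoint_iff]
    intro x y
    simp [inner_smul_left, inner_smul_right, mul_comm]
  · intro x
    have : ((innerSL ℂ ψ).smulRight ψ).reApplyInnerSelf x
        = Complex.re ((starRingEnd ℂ) ⟪ψ, x⟫ * ⟪ψ, x⟫) := by
      simp [ContinuousLinearMap.reApplyInnerSelf, inner_smul_left]
    rw [this, RCLike.conj_mul]
    exact_mod_cast sq_nonneg ‖⟪ψ, x⟫‖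
end main


set_option maxHeartbeats 1000000 in
set_option synthInstance.maxHeartbeats 400000 in
/-- commuting operator strategies yield strongly non-signaling sequential
strategies with the same correlation.  Given a commuting operator strategy
`(H, ψ, {M_xa}, {N_yb})`, define `σ_xa := √(M_xa) |ψ⟩⟨ψ| √(M_xa)` (here `R x a` is the
positive square root of `M x a`, and `|ψ⟩⟨ψ|` is `(innerSL ℂ ψ).smulRight ψ`), and let `𝔅` be
the closed star subalgebra of `B(H)` generated by the `N_yb`.  Then `(H, {σ_xa}, {N_yb})` is a
quantum sequential strategy, it is strongly non-signaling with respect to `𝔅`, and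
`tr(σ_xa N_yb) = ⟪ψ, M_xa N_yb ψ⟫`. -/
theorem stmt15 {H : Type u} [NormedAddCommGroup H] [InnerProductSpace ℂ H] [CompleteSpace H]
    {ι : Type*} (e : HilbertBasis ι ℂ H)
    {IA IB OA OB : Type*} [Fintype OA] [Fintype OB]
    (ψ : H) (hψ : ‖ψ‖ = 1)
    (M : IA → OA → H →L[ℂ] H) (N : IB → OB → H →L[ℂ] H)
    (hM : ∀ x, IsPOVM (M x)) (hN : ∀ y, IsPOVM (N y))
    (hcomm : ∀ x a y b, Commute (M x a) (N y b))
    (R : IA → OA → H →L[ℂ] H)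
    (hR_pos : ∀ x a, (R x a).IsPositive)
    (hR_sq : ∀ x a, R x a * R x a = M x a)
    (σ : IA → OA → H →L[ℂ] H)
    (hσ_def : ∀ x a, σ x a = R x a ∘L ((innerSL ℂ ψ).smulRight ψ) ∘L R x a) :
    (∀ x a, (σ x a).IsPositive) ∧
    (∀ x a, Summable fun i => ⟪(e i : H), σ x a (e i)⟫) ∧
    (∀ x, traceAlong e (∑ a, σ x a) = 1) ∧
    (∀ x x' : IA,
      ∀ C ∈ (StarAlgebra.adjoin ℂ
          (Set.range fun w : IB × OB => N w.1 w.2)).topologicalClosure,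
        traceAlong e ((∑ a, σ x a) ∘L C) = traceAlong e ((∑ a, σ x' a) ∘L C)) ∧
    (∀ x y a b, traceAlong e (σ x a ∘L N y b) = ⟪ψ, (M x a * N y b) ψ⟫) := by
  have hRadj : ∀ x a, ContinuousLinearMap.adjoint (R x a) = R x a := fun x a =>
    ContinuousLinearMap.isSelfAdjoint_iff'.mp (hR_pos x a).isSelfAdjoint
  -- commutation of R with the N's
  have hRN : ∀ x a y b, Commute (R x a) (N y b) := fun x a y b =>
    aux_commute_sqrt ((ContinuousLinearMap.nonneg_iff_isPositive _).mpr ((hM x).1 a))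
      ((ContinuousLinearMap.nonneg_iff_isPositive _).mpr (hR_pos x a)) (hR_sq x a)
      ((hN y).1 b).isSelfAdjoint (hcomm x a y b)
  -- positivity
  have hpos : ∀ x a, (σ x a).IsPositive := by
    intro x a
    rw [hσ_def]
    have := (aux_proj_pos ψ).conj_adjoint (R x a)
    rwa [hRadj] at this
  -- summability
  have hsum : ∀ x a, Summable fun i => ⟪(e i : H), σ x a (e i)⟫ := by
    intro x a
    rw [hσ_def]
    exact aux_summable e ψ _ _
  -- trace of σ composed with anything
  have htrC : ∀ x a (C : H →L[ℂ] H),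
      traceAlong e (σ x a ∘L C) = ⟪ψ, R x a (C (R x a ψ))⟫ := by
    intro x a C
    rw [hσ_def, ContinuousLinearMap.comp_assoc, ContinuousLinearMap.comp_assoc]
    exact aux_trace e ψ (R x a) (R x a ∘L C)
  have htr : ∀ x a, traceAlong e (σ x a) = ⟪ψ, M x a ψ⟫ := by
    intro x a
    have h1 := htrC x a 1
    simpa [← hR_sq x a, ContinuousLinearMap.mul_apply, ContinuousLinearMap.one_def] using h1
  have hψψ : ⟪ψ, ψ⟫ = 1 := by
    rw [inner_self_eq_norm_sq_to_K, hψ]; norm_num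
  refine ⟨hpos, hsum, ?_, ?_, ?_⟩
  · intro x
    rw [aux_traceAlong_sum e _ (hsum x)]
    simp only [htr]
    rw [← inner_sum]
    have : ∑ a, M x a ψ = (∑ a, M x a) ψ := by
      rw [ContinuousLinearMap.sum_apply]
    rw [this, (hM x).2, ContinuousLinearMap.one_apply, hψψ]
  · intro x x' C hC
    have hRC : ∀ x a, Commute (R x a) C := by
      intro x a
      have hle : (StarAlgebra.adjoin ℂ
          (Set.range fun w : IB × OB => N w.1 w.2)).topologicalClosure
          ≤ StarSubalgebra.centralizer ℂ {R x a} := by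
        refine StarSubalgebra.topologicalClosure_minimal ?_ (aux_isClosed_centralizer _)
        refine StarAlgebra.adjoin_le ?_
        rintro _ ⟨⟨y, b⟩, rfl⟩
        simp only [SetLike.mem_coe]
        rw [StarSubalgebra.mem_centralizer_iff ℂ]
        rintro g rfl
        refine ⟨(hRN x a y b).eq, ?_⟩
        rw [ContinuousLinearMap.star_eq_adjoint, hRadj]
        exact (hRN x a y b).eq
      have := ((StarSubalgebra.mem_centralizer_iff ℂ).mp (hle hC)) (R x a) rfl
      exact this.1
    have key : ∀ x'', traceAlong e ((∑ a, σ x'' a) ∘L C) = ⟪ψ, C ψ⟫ := by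
      intro x''
      have hcompsum : (∑ a, σ x'' a) ∘L C = ∑ a, (σ x'' a ∘L C) := by
        ext v
        simp [ContinuousLinearMap.sum_apply]
      rw [hcompsum, aux_traceAlong_sum e _ (fun a => by
        rw [hσ_def, ContinuousLinearMap.comp_assoc, ContinuousLinearMap.comp_assoc]
        exact aux_summable e ψ _ _)]
      have hterm : ∀ a, traceAlong e (σ x'' a ∘L C) = ⟪ψ, C (M x'' a ψ)⟫ := by
        intro a
        rw [htrC x'' a C]
        have h1 : R x'' a (C (R x'' a ψ)) = C (R x'' a (R x'' a ψ)) := by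
          have := (hRC x'' a).eq
          calc R x'' a (C (R x'' a ψ)) = (R x'' a * C) (R x'' a ψ) := rfl
            _ = (C * R x'' a) (R x'' a ψ) := by rw [this]
            _ = C (R x'' a (R x'' a ψ)) := rfl
        rw [h1]
        congr 1
        have : R x'' a (R x'' a ψ) = (R x'' a * R x'' a) ψ := rfl
        rw [this, hR_sq]
      simp only [hterm]
      rw [← inner_sum, ← map_sum]
      congr 2
      rw [← ContinuousLinearMap.sum_apply, (hM x'').2, ContinuousLinearMap.one_apply]
    rw [key x, key x']
  · intro x y a b
    rw [htrC x a (N y b)]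
    have h1 : R x a (N y b (R x a ψ)) = N y b (M x a ψ) := by
      calc R x a (N y b (R x a ψ)) = (R x a * N y b) (R x a ψ) := rfl
        _ = (N y b * R x a) (R x a ψ) := by rw [(hRN x a y b).eq]
        _ = N y b ((R x a * R x a) ψ) := rfl
        _ = N y b (M x a ψ) := by rw [hR_sq]
    rw [h1]
    have h2 : (M x a * N y b) ψ = N y b (M x a ψ) := by
      rw [(hcomm x a y b).eq]; rfl
    rw [h2]
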